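/- Let σ be a complex 2×2 involution with σ² = I, let |Ψ⟩ ∈ ℂ² be a unit vector, and let α ∈ ℝ. Define S(v) = |0⟩ ⊗ v + |1⟩ ⊗ σv. Then the projection of (exp(iα σ_x) ⊗ I)(S|Ψ⟩) onto |0⟩ in the first factor equals exp(iα σ)|Ψ⟩, and the projection onto |1⟩ in the first factor equals σ · exp(iα σ)|Ψ⟩; moreover applying iσ to the latter yields i·exp(iα σ)|Ψ⟩, proportional to the target state. -/

import Mathlib

open Matrix Kronecker Complex

lemma exp_smul_involution (A : Matrix (Fin 2) (Fin 2) ℂ) (hA : A * A = 1) (t : ℂ) :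
    NormedSpace.exp (t • A) =
      Complex.cosh t • (1 : Matrix (Fin 2) (Fin 2) ℂ) + Complex.sinh t • A := by
  have hAe : ∀ n : ℕ, A ^ (2 * n) = 1 := fun n => by rw [pow_mul, sq, hA, one_pow]
  rw [NormedSpace.exp_eq_tsum (𝕂 := ℂ)]
  refine HasSum.tsum_eq ?_
  refine HasSum.even_add_odd ?_ ?_
  · have := (Complex.hasSum_cosh t).smul_const (1 : Matrix (Fin 2) (Fin 2) ℂ)
    convert this using 2 with n
    case e'_3 => rfl
    rw [smul_pow, hAe n, smul_smul]
    congr 1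
    ring
  · have := (Complex.hasSum_sinh t).smul_const A
    convert this using 2 with n
    case e'_3 => rfl
    rw [smul_pow, pow_succ A, hAe n, one_mul, smul_smul]
    congr 1
    ring

theorem crio_final_step (σ : Matrix (Fin 2) (Fin 2) ℂ) (hσ : σ * σ = 1)
    (Ψ : Fin 2 → ℂ) (hΨ : ∑ i, ‖Ψ i‖ ^ 2 = 1) (α : ℝ)
    (S : (Fin 2 → ℂ) → (Fin 2 × Fin 2 → ℂ))
    (hS : ∀ v : Fin 2 → ℂ, S v = fun p =>
      (![(1 : ℂ), 0] p.1) * v p.2 + (![(0 : ℂ), 1] p.1) * σ.mulVec v p.2)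
    (σx : Matrix (Fin 2) (Fin 2) ℂ) (hx : σx = !![0, 1; 1, 0])
    (W : Fin 2 × Fin 2 → ℂ)
    (hW : W = ((NormedSpace.exp ((Complex.I * (α : ℂ)) • σx)) ⊗ₖ
      (1 : Matrix (Fin 2) (Fin 2) ℂ)).mulVec (S Ψ)) :
    (fun j => W (0, j)) = (NormedSpace.exp ((Complex.I * (α : ℂ)) • σ)).mulVec Ψ ∧
    (fun j => W (1, j)) =
      σ.mulVec ((NormedSpace.exp ((Complex.I * (α : ℂ)) • σ)).mulVec Ψ) ∧
    Complex.I • σ.mulVec (fun j => W (1, j)) =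
      Complex.I • (NormedSpace.exp ((Complex.I * (α : ℂ)) • σ)).mulVec Ψ := by
  have hσx : σx * σx = 1 := by
    subst hx
    ext i j
    fin_cases i <;> fin_cases j <;>
      simp [Matrix.mul_apply, Fin.sum_univ_two, Matrix.one_apply]
  have hE : NormedSpace.exp ((Complex.I * (α : ℂ)) • σ) =
      Complex.cos (α : ℂ) • (1 : Matrix (Fin 2) (Fin 2) ℂ) +
        (Complex.sin (α : ℂ) * Complex.I) • σ := by
    rw [exp_smul_involution σ hσ, mul_comm Complex.I ((α : ℂ)), Complex.cosh_mul_I,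
      Complex.sinh_mul_I]
  have hEx : NormedSpace.exp ((Complex.I * (α : ℂ)) • σx) =
      Complex.cos (α : ℂ) • (1 : Matrix (Fin 2) (Fin 2) ℂ) +
        (Complex.sin (α : ℂ) * Complex.I) • σx := by
    rw [exp_smul_involution σx hσx, mul_comm Complex.I ((α : ℂ)), Complex.cosh_mul_I,
      Complex.sinh_mul_I]
  have key : σ * NormedSpace.exp ((Complex.I * (α : ℂ)) • σ) =
      (Complex.sin (α : ℂ) * Complex.I) • (1 : Matrix (Fin 2) (Fin 2) ℂ) +
        Complex.cos (α : ℂ) • σ := by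
    rw [hE, mul_add, mul_smul_comm, mul_smul_comm, mul_one, hσ, add_comm]
  have h1 : (fun j => W (0, j)) =
      (NormedSpace.exp ((Complex.I * (α : ℂ)) • σ)).mulVec Ψ := by
    funext j
    simp only [hW, hEx, hE, hS]
    fin_cases j <;>
      simp [hx, Matrix.mulVec, dotProduct, Fintype.sum_prod_type, Fin.sum_univ_two,
        Matrix.kroneckerMap_apply, Matrix.add_apply, Matrix.smul_apply, Matrix.one_apply] <;>
      ring
  have h2 : (fun j => W (1, j)) =
      σ.mulVec ((NormedSpace.exp ((Complex.I * (α : ℂ)) • σ)).mulVec Ψ) := by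
    rw [Matrix.mulVec_mulVec, key]
    funext j
    simp only [hW, hEx, hS]
    fin_cases j <;>
      simp [hx, Matrix.mulVec, dotProduct, Fintype.sum_prod_type, Fin.sum_univ_two,
        Matrix.kroneckerMap_apply, Matrix.add_apply, Matrix.smul_apply, Matrix.one_apply] <;>
      ring
  refine ⟨h1, h2, ?_⟩
  rw [h2, Matrix.mulVec_mulVec, hσ, Matrix.one_mulVec]
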